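/- Work with real polynomials P in four variables x₁, x₂, x₃, x₄, with formal partial derivatives ∂ᵢ and formal Laplacian ΔP := Σ_{i=1}^{4} ∂ᵢ(∂ᵢ P). Define the three operators L₁P := x₃·∂₁P + x₄·∂₂P − x₁·∂₃P − x₂·∂₄P, L₂P := −x₄·∂₁P + x₃·∂₂P − x₂·∂₃P + x₁·∂₄P, L₃P := x₂·∂₁P − x₁·∂₂P − x₄·∂₃P + x₃·∂₄P. If P is homogeneous of degree p and harmonic (ΔP = 0), then for each k ∈ {1, 2, 3} the polynomial LₖP is again homogeneous of degree p and harmonic. -/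

import Mathlib

open MvPolynomial

private lemma pderiv_comm' {σ : Type*} [DecidableEq σ] (i j : σ) (P : MvPolynomial σ ℝ) :
    pderiv i (pderiv j P) = pderiv j (pderiv i P) := by
  induction P using MvPolynomial.induction_on' with
  | monomial d a =>
    rcases eq_or_ne i j with rfl | hij
    · rfl
    · simp only [pderiv_monomial]
      have h1 : (d - Finsupp.single j 1 : (σ →₀ ℕ)) i = d i := by
        simp [Finsupp.tsub_apply, Finsupp.single_apply, hij.symm]
      have h2 : (d - Finsupp.single i 1 : (σ →₀ ℕ)) j = d j := by
        simp [Finsupp.tsub_apply, Finsupp.single_apply, hij]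
      rw [h1, h2, tsub_tsub, tsub_tsub, add_comm (Finsupp.single j 1)]
      ring_nf
  | add p q hp hq => simp [map_add, hp, hq]

private lemma deg4_eq (d : Fin 4 →₀ ℕ) : d.degree = ∑ i : Fin 4, d i := by
  unfold Finsupp.degree
  exact (Finset.sum_subset (Finset.subset_univ _)
    (fun i _ h => Finsupp.notMem_support_iff.mp h) : ∑ i ∈ d.support, d i = ∑ i : Fin 4, d i)

private lemma hom_aux (a b : Fin 4) {P : MvPolynomial (Fin 4) ℝ} {p : ℕ}
    (h : P.IsHomogeneous p) :
    (X a * pderiv b P : MvPolynomial (Fin 4) ℝ).IsHomogeneous p := by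
  rw [P.as_sum, map_sum, Finset.mul_sum]
  apply IsHomogeneous.sum
  intro d hd
  rcases Nat.eq_zero_or_pos (d b) with h0 | hpos
  · simp [pderiv_monomial, h0]
    exact isHomogeneous_zero _ _ _
  · rw [pderiv_monomial, X, monomial_mul]
    apply isHomogeneous_monomial
    have hdeg : d.degree = p := by
      have := h (mem_support_iff.mp hd)
      rw [Finsupp.degree_eq_weight_one]; exact this
    rw [deg4_eq] at hdeg ⊢
    rw [Fin.sum_univ_four] at hdeg ⊢
    simp only [Finsupp.add_apply, Finsupp.tsub_apply, Finsupp.single_apply]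
    fin_cases a <;> fin_cases b <;> simp_all <;> omega

/-- The formal Laplacian on polynomials in four variables. -/
noncomputable def lap4 (P : MvPolynomial (Fin 4) ℝ) : MvPolynomial (Fin 4) ℝ :=
  ∑ i : Fin 4, pderiv i (pderiv i P)

private lemma lapX (a : Fin 4) (Q : MvPolynomial (Fin 4) ℝ) :
    lap4 (X a * Q) = 2 * pderiv a Q + X a * lap4 Q := by
  unfold lap4
  rw [Fin.sum_univ_four, Fin.sum_univ_four]
  fin_cases a <;>
    · simp [pderiv_mul, pderiv_X, Pi.single_apply, Fin.ext_iff,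
        show ((3:Fin 4):ℕ) = 3 from rfl, show ((2:Fin 4):ℕ) = 2 from rfl,
        show ((1:Fin 4):ℕ) = 1 from rfl, show ((0:Fin 4):ℕ) = 0 from rfl]
      ring

private lemma lap4_add (P Q : MvPolynomial (Fin 4) ℝ) :
    lap4 (P + Q) = lap4 P + lap4 Q := by
  simp [lap4, map_add, Finset.sum_add_distrib]

private lemma lap4_neg (P : MvPolynomial (Fin 4) ℝ) : lap4 (-P) = -lap4 P := by
  simp [lap4, map_neg, Finset.sum_neg_distrib]

private lemma lap4_sub (P Q : MvPolynomial (Fin 4) ℝ) :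
    lap4 (P - Q) = lap4 P - lap4 Q := by
  rw [sub_eq_add_neg, lap4_add, lap4_neg, sub_eq_add_neg]

private lemma lap4_pderiv (b : Fin 4) (P : MvPolynomial (Fin 4) ℝ) :
    lap4 (pderiv b P) = pderiv b (lap4 P) := by
  unfold lap4
  rw [map_sum]
  refine Finset.sum_congr rfl fun i _ => ?_
  rw [pderiv_comm' i b P, pderiv_comm' i b (pderiv i P)]

private lemma lapXd (a b : Fin 4) {P : MvPolynomial (Fin 4) ℝ} (h : lap4 P = 0) :
    lap4 (X a * pderiv b P) = 2 * pderiv a (pderiv b P) := by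
  rw [lapX, lap4_pderiv, h, map_zero, mul_zero, add_zero]

/-- `L₁ = x₃∂₁ + x₄∂₂ - x₁∂₃ - x₂∂₄` (0-indexed variables). -/
noncomputable def Lop1 (P : MvPolynomial (Fin 4) ℝ) : MvPolynomial (Fin 4) ℝ :=
  X 2 * pderiv 0 P + X 3 * pderiv 1 P - X 0 * pderiv 2 P - X 1 * pderiv 3 P

/-- `L₂ = -x₄∂₁ + x₃∂₂ - x₂∂₃ + x₁∂₄` (0-indexed variables). -/
noncomputable def Lop2 (P : MvPolynomial (Fin 4) ℝ) : MvPolynomial (Fin 4) ℝ :=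
  -(X 3 * pderiv 0 P) + X 2 * pderiv 1 P - X 1 * pderiv 2 P + X 0 * pderiv 3 P

/-- `L₃ = x₂∂₁ - x₁∂₂ - x₄∂₃ + x₃∂₄` (0-indexed variables). -/
noncomputable def Lop3 (P : MvPolynomial (Fin 4) ℝ) : MvPolynomial (Fin 4) ℝ :=
  X 1 * pderiv 0 P - X 0 * pderiv 1 P - X 3 * pderiv 2 P + X 2 * pderiv 3 P

/-- If `P` is homogeneous of degree `p` and harmonic, then so are `L₁P`, `L₂P`, `L₃P`. -/
theorem stmt14 (p : ℕ) (P : MvPolynomial (Fin 4) ℝ)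
    (hhom : P.IsHomogeneous p) (hharm : lap4 P = 0) :
    ((Lop1 P).IsHomogeneous p ∧ lap4 (Lop1 P) = 0) ∧
    ((Lop2 P).IsHomogeneous p ∧ lap4 (Lop2 P) = 0) ∧
    ((Lop3 P).IsHomogeneous p ∧ lap4 (Lop3 P) = 0) := by
  refine ⟨⟨?_, ?_⟩, ⟨?_, ?_⟩, ⟨?_, ?_⟩⟩
  · exact (((hom_aux 2 0 hhom).add (hom_aux 3 1 hhom)).sub (hom_aux 0 2 hhom)).sub
      (hom_aux 1 3 hhom)
  · rw [Lop1, lap4_sub, lap4_sub, lap4_add, lapXd 2 0 hharm, lapXd 3 1 hharm,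
      lapXd 0 2 hharm, lapXd 1 3 hharm, pderiv_comm' 2 0, pderiv_comm' 3 1]
    ring
  · exact ((((hom_aux 3 0 hhom).neg).add (hom_aux 2 1 hhom)).sub (hom_aux 1 2 hhom)).add
      (hom_aux 0 3 hhom)
  · rw [Lop2, lap4_add, lap4_sub, lap4_add, lap4_neg, lapXd 3 0 hharm, lapXd 2 1 hharm,
      lapXd 1 2 hharm, lapXd 0 3 hharm, pderiv_comm' 3 0, pderiv_comm' 2 1]
    ring
  · exact (((hom_aux 1 0 hhom).sub (hom_aux 0 1 hhom)).sub (hom_aux 3 2 hhom)).add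
      (hom_aux 2 3 hhom)
  · rw [Lop3, lap4_add, lap4_sub, lap4_sub, lapXd 1 0 hharm, lapXd 0 1 hharm,
      lapXd 3 2 hharm, lapXd 2 3 hharm, pderiv_comm' 1 0, pderiv_comm' 3 2]
    ring
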